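/- Let H ⊆ J be open compact subgroups of a locally profinite group G with H pro-(order prime to ℓ), let π be an irreducible smooth representation of G over a field C of characteristic ℓ with π^J ≠ 0, and suppose the restriction π|_H contains an irreducible subquotient ρ. Then there exists g ∈ G such that ρ has a nonzero vector fixed by H ∩ gJg^{-1}. -/

import Mathlib

/-- An `ℓ'`-subgroup: an open compact subgroup that is profinite with all finite continuous
quotients of order prime to `ℓ`. -/
def IsEllPrimeSubgroup {G : Type*} [Group G] [TopologicalSpace G] (ℓ : ℕ)
    (K : Subgroup G) : Prop :=
  IsOpen (K : Set G) ∧ IsCompact (K : Set G) ∧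
    ∀ N : Subgroup K, N.Normal → IsOpen (N : Set K) → ¬ (ℓ ∣ N.index)

/-- let `H ⊆ J` be open compact subgroups of a locally profinite group `G`
with `H` an `ℓ'`-subgroup, `π` an irreducible smooth representation of `G` over a field `C`
of characteristic `ℓ` with `π^J ≠ 0`, and `ρ` an irreducible subquotient of `π|_H` (given by
an `H`-equivariant surjection `s : π → ρ`). Then some `g ∈ G` gives a nonzero vector of `ρ`
fixed by `H ∩ gJg⁻¹`. -/
theorem exists_fixed_vector_in_subquotient
    (ℓ : ℕ)
    (G : Type*) [Group G] [TopologicalSpace G] [IsTopologicalGroup G]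
    [T2Space G] [LocallyCompactSpace G] [TotallyDisconnectedSpace G]
    (C : Type*) [Field C] [CharP C ℓ]
    (H J : Subgroup G) (hHJ : H ≤ J)
    (hH : IsEllPrimeSubgroup ℓ H)
    (hJopen : IsOpen (J : Set G)) (hJcpt : IsCompact (J : Set G))
    (V : Type*) [AddCommGroup V] [Module C V] [Nontrivial V]
    (π : Representation C G V)
    (hsmooth : ∀ v : V, IsOpen {g : G | π g v = v})
    (hirr : ∀ U : Submodule C V, (∀ g : G, ∀ u ∈ U, π g u ∈ U) → U = ⊥ ∨ U = ⊤)
    -- `π^J ≠ 0`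
    (hfix : ∃ v : V, v ≠ 0 ∧ ∀ g ∈ J, π g v = v)
    -- `ρ`, an irreducible subquotient of `π|_H`, with `H`-equivariant surjection `s`
    (W : Type*) [AddCommGroup W] [Module C W] [Nontrivial W]
    (ρ : Representation C H W)
    (hρirr : ∀ U : Submodule C W, (∀ h : H, ∀ u ∈ U, ρ h u ∈ U) → U = ⊥ ∨ U = ⊤)
    (s : V →ₗ[C] W) (hs : Function.Surjective s)
    (hequiv : ∀ h : H, ∀ x : V, s (π (h : G) x) = ρ h (s x)) :
    ∃ g : G, ∃ w : W, w ≠ 0 ∧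
      ∀ h : H, ((g⁻¹ * (h : G) * g) ∈ J) → ρ h w = w := by
  obtain ⟨v, hv0, hvJ⟩ := hfix
  -- find g with s (π g v) ≠ 0
  have hg : ∃ g : G, s (π g v) ≠ 0 := by
    by_contra hc
    push_neg at hc
    have hinv : ∀ g : G, ∀ u ∈ Submodule.span C (Set.range fun g : G => π g v),
        π g u ∈ Submodule.span C (Set.range fun g : G => π g v) := by
      intro g u hu
      have : π g '' (Set.range fun g : G => π g v) ⊆
          (Set.range fun g : G => π g v) := by
        rintro _ ⟨_, ⟨g', rfl⟩, rfl⟩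
        exact ⟨g * g', by simp [map_mul]⟩
      have := Submodule.span_mono (R := C) this
      rw [Submodule.span_image] at this
      exact this ⟨u, hu, rfl⟩
    have hspan : Submodule.span C (Set.range fun g : G => π g v) = ⊤ := by
      rcases hirr _ hinv with h | h
      · exfalso
        have : v ∈ Submodule.span C (Set.range fun g : G => π g v) :=
          Submodule.subset_span ⟨1, by simp⟩
        rw [h] at this
        exact hv0 (by simpa using this)
      · exact h
    have hker : Submodule.span C (Set.range fun g : G => π g v) ≤ LinearMap.ker s := by
      rw [Submodule.span_le]
      rintro _ ⟨g, rfl⟩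
      exact hc g
    rw [hspan, top_le_iff] at hker
    obtain ⟨w, hw⟩ := exists_ne (0 : W)
    obtain ⟨x, rfl⟩ := hs w
    exact hw (by have : x ∈ LinearMap.ker s := hker ▸ Submodule.mem_top; simpa using this)
  obtain ⟨g, hgne⟩ := hg
  refine ⟨g, s (π g v), hgne, ?_⟩
  intro h hh
  rw [← hequiv h (π g v)]
  have : π (h : G) (π g v) = π g v := by
    have : (h : G) * g = g * (g⁻¹ * (h : G) * g) := by group
    calc π (h : G) (π g v) = π ((h : G) * g) v := by simp [map_mul]
      _ = π g (π (g⁻¹ * (h : G) * g) v) := by rw [this]; simp [map_mul]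
      _ = π g v := by rw [hvJ _ hh]
  rw [this]
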